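/- arXiv:1312.2433 — 2 statements merged into one kernel-verified Lean document; each statement's English description precedes it below -/
import Mathlib

section
/- Let T₁, T₂ be the first two jump times of a Poisson process N with intensity λ > 0, and 0 < a < 1. Set β = λ(1/a - 1). Then for all t ≥ 0, P(T₁ ∧ aT₂ > t) · e^{λt} restricted to the event {T₁ > t} computes as: P(T₁ ∧ aT₂ > t | F_t) = 1_{T₁ > t} e^{-βt}(βt + 1), where F_t is the natural filtration of N. -/
open MeasureTheory ProbabilityTheory Real Set

lemma expMeasure_Iic {r : ℝ} (hr : 0 < r) (x : ℝ) :
    expMeasure r (Set.Iic x) = ENNReal.ofReal (if 0 ≤ x then 1 - Real.exp (-(r * x)) else 0) := by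
  rw [expMeasure, gammaMeasure, withDensity_apply _ measurableSet_Iic,
    ← lintegral_exponentialPDF_eq_antiDeriv hr x]
  rfl

lemma expMeasure_Ioi {r : ℝ} (hr : 0 < r) (x : ℝ) :
    expMeasure r (Set.Ioi x) = ENNReal.ofReal (Real.exp (-(r * max x 0))) := by
  haveI := isProbabilityMeasure_expMeasure hr
  have h : Set.Ioi x = (Set.Iic x)ᶜ := Set.compl_Iic.symm
  rw [h, measure_compl measurableSet_Iic (measure_ne_top _ _), measure_univ,
    expMeasure_Iic hr]
  rcases le_or_gt 0 x with hx | hx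
  · rw [if_pos hx, max_eq_left hx, ← ENNReal.ofReal_one,
      ← ENNReal.ofReal_sub _ (by nlinarith [Real.exp_le_one_iff.2 (by nlinarith : -(r*x) ≤ 0), Real.exp_pos (-(r*x))])]
    norm_num
  · rw [if_neg (not_le.2 hx), max_eq_right hx.le]
    simp

lemma expProd_apply {r t u : ℝ} (hr : 0 < r) (ht : 0 ≤ t) (htu : t ≤ u) :
    ((expMeasure r).prod (expMeasure r)) {p : ℝ × ℝ | t < p.1 ∧ u < p.1 + p.2}
      = ENNReal.ofReal (Real.exp (-(r * u)) * (r * (u - t) + 1)) := by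
  have hu : 0 ≤ u := ht.trans htu
  haveI := isProbabilityMeasure_expMeasure hr
  have hset : MeasurableSet {p : ℝ × ℝ | t < p.1 ∧ u < p.1 + p.2} := by
    have : {p : ℝ × ℝ | t < p.1 ∧ u < p.1 + p.2}
        = {p : ℝ × ℝ | t < p.1} ∩ {p : ℝ × ℝ | u < p.1 + p.2} := rfl
    rw [this]
    exact (measurableSet_lt measurable_const measurable_fst).inter
      (measurableSet_lt measurable_const (measurable_fst.add measurable_snd))
  rw [Measure.prod_apply hset]
  have hsec : ∀ x : ℝ, (Prod.mk x ⁻¹' {p : ℝ × ℝ | t < p.1 ∧ u < p.1 + p.2})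
      = if t < x then Set.Ioi (u - x) else ∅ := by
    intro x
    ext y
    by_cases hx : t < x <;> simp [hx, Set.mem_Ioi, sub_lt_iff_lt_add']
  have step : ∫⁻ x, expMeasure r (Prod.mk x ⁻¹' {p : ℝ × ℝ | t < p.1 ∧ u < p.1 + p.2})
        ∂(expMeasure r)
      = ∫⁻ x in Set.Ioi t, expMeasure r (Set.Ioi (u - x)) ∂(expMeasure r) := by
    rw [← lintegral_indicator measurableSet_Ioi _]
    refine lintegral_congr fun x => ?_
    rw [hsec]
    by_cases hx : t < x
    · rw [if_pos hx, Set.indicator_of_mem (Set.mem_Ioi.2 hx)]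
    · rw [if_neg hx, Set.indicator_of_notMem (fun h => hx (Set.mem_Ioi.1 h)), measure_empty]
  rw [step, ← Set.Ioc_union_Ioi_eq_Ioi htu,
    lintegral_union measurableSet_Ioi (Set.Ioc_disjoint_Ioi le_rfl)]
  have h2 : ∫⁻ x in Set.Ioi u, expMeasure r (Set.Ioi (u - x)) ∂(expMeasure r)
      = ENNReal.ofReal (Real.exp (-(r * u))) := by
    rw [setLIntegral_congr_fun measurableSet_Ioi
      (fun x (hx : u < x) => by
        rw [expMeasure_Ioi hr, max_eq_right (by linarith), mul_zero, neg_zero, Real.exp_zero,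
          ENNReal.ofReal_one])]
    simp only [setLIntegral_one]
    rw [expMeasure_Ioi hr, max_eq_left hu]
  have h1 : ∫⁻ x in Set.Ioc t u, expMeasure r (Set.Ioi (u - x)) ∂(expMeasure r)
      = ENNReal.ofReal (r * Real.exp (-(r * u))) * ENNReal.ofReal (u - t) := by
    rw [setLIntegral_congr_fun measurableSet_Ioc
      (fun x hx => by
        rw [expMeasure_Ioi hr, max_eq_left (by simp only [Set.mem_Ioc] at hx; linarith)])]
    rw [expMeasure, gammaMeasure,
      setLIntegral_withDensity_eq_setLIntegral_mul _
        (show Measurable (gammaPDF 1 r) from (measurable_gammaPDFReal 1 r).ennreal_ofReal)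
        (show Measurable fun x : ℝ => ENNReal.ofReal (Real.exp (-(r * (u - x)))) from
          Measurable.ennreal_ofReal (by fun_prop)) measurableSet_Ioc]
    rw [setLIntegral_congr_fun measurableSet_Ioc
      (fun x hx => ?_), setLIntegral_const, Real.volume_Ioc]
    simp only [Set.mem_Ioc] at hx
    have hx0 : (0:ℝ) ≤ x := le_of_lt (lt_of_le_of_lt ht hx.1)
    show gammaPDF 1 r x * ENNReal.ofReal (Real.exp (-(r * (u - x))))
        = ENNReal.ofReal (r * Real.exp (-(r * u)))
    have : gammaPDF 1 r x = exponentialPDF r x := rfl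
    rw [this, exponentialPDF_of_nonneg hx0,
      ← ENNReal.ofReal_mul (by positivity)]
    congr 1
    rw [mul_assoc, ← Real.exp_add]
    ring_nf
  rw [h1, h2, ← ENNReal.ofReal_mul (by positivity), ← ENNReal.ofReal_add (mul_nonneg (by positivity) (sub_nonneg.2 htu)) (Real.exp_pos (-(r*u))).le]
  congr 1
  ring

lemma measurableSet_2d (t u : ℝ) : MeasurableSet {p : ℝ × ℝ | t < p.1 ∧ u < p.1 + p.2} := by
  have : {p : ℝ × ℝ | t < p.1 ∧ u < p.1 + p.2}
      = {p : ℝ × ℝ | t < p.1} ∩ {p : ℝ × ℝ | u < p.1 + p.2} := rfl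
  rw [this]
  exact (measurableSet_lt measurable_const measurable_fst).inter
    (measurableSet_lt measurable_const (measurable_fst.add measurable_snd))

/-- The σ-algebra of measurable sets that either contain `S` or are disjoint from `S`. -/
def traceTrivialSigma {Ω : Type*} [MeasurableSpace Ω] (S : Set Ω) : MeasurableSpace Ω where
  MeasurableSet' A := MeasurableSet A ∧ (S ⊆ A ∨ A ∩ S = ∅)
  measurableSet_empty := ⟨MeasurableSet.empty, Or.inr (Set.empty_inter S)⟩
  measurableSet_compl := by
    rintro A ⟨hA, h | h⟩
    · exact ⟨hA.compl, Or.inr (Set.eq_empty_iff_forall_notMem.2 fun ω hω => hω.1 (h hω.2))⟩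
    · exact ⟨hA.compl, Or.inl fun ω hω hA' =>
        (Set.eq_empty_iff_forall_notMem.1 h ω) ⟨hA', hω⟩⟩
  measurableSet_iUnion := by
    intro f hf
    refine ⟨MeasurableSet.iUnion fun i => (hf i).1, ?_⟩
    by_cases hex : ∃ i, S ⊆ f i
    · obtain ⟨i, hi⟩ := hex
      exact Or.inl (hi.trans (Set.subset_iUnion f i))
    · push_neg at hex
      refine Or.inr (Set.eq_empty_iff_forall_notMem.2 fun ω hω => ?_)
      obtain ⟨i, hi⟩ := Set.mem_iUnion.1 hω.1
      have h2 := (hf i).2.resolve_left (hex i)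
      exact (Set.eq_empty_iff_forall_notMem.1 h2 ω) ⟨hi, hω.2⟩
/-- For the first two jump times `T₁, T₂` of a Poisson process with intensity `λ`
(`T₁ ~ Exp(λ)`, `T₂ - T₁ ~ Exp(λ)` independent of `T₁`), `0 < a < 1` and
`β = λ(1/a - 1)`, the Azéma supermartingale of `τ = T₁ ∧ aT₂` is
`P(τ > t | F_t) = 1_{T₁ > t} e^{-βt}(βt + 1)`, where `F` is the natural filtration
of the counting process `N`. -/
theorem condexp_min_jump_times {Ω : Type*} [MeasurableSpace Ω] (μ : Measure Ω)
    [IsProbabilityMeasure μ] (lam a : ℝ) (hlam : 0 < lam) (ha0 : 0 < a) (ha1 : a < 1)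
    (T₁ T₂ : Ω → ℝ) (hT₁m : Measurable T₁) (hT₂m : Measurable T₂)
    (hpos : ∀ ω, 0 < T₁ ω ∧ T₁ ω < T₂ ω)
    (hd1 : Measure.map T₁ μ = expMeasure lam)
    (hd2 : Measure.map (fun ω => T₂ ω - T₁ ω) μ = expMeasure lam)
    (hindep : IndepFun T₁ (fun ω => T₂ ω - T₁ ω) μ)
    (N : ℝ → Ω → ℝ)
    (hN : ∀ t ω, N t ω = (if T₁ ω ≤ t then 1 else 0) + (if T₂ ω ≤ t then 1 else 0))
    (F : ℝ → MeasurableSpace Ω)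
    (hF : ∀ t, F t = ⨆ s ∈ Set.Icc (0 : ℝ) t, MeasurableSpace.comap (N s) inferInstance)
    (β : ℝ) (hβ : β = lam * (1 / a - 1)) :
    ∀ t : ℝ, 0 ≤ t →
      μ[Set.indicator {ω | t < min (T₁ ω) (a * T₂ ω)} (fun _ => (1 : ℝ)) | F t]
        =ᵐ[μ] fun ω => (if t < T₁ ω then 1 else 0) * (Real.exp (-β * t) * (β * t + 1)) := by
  intro t ht
  set u : ℝ := t / a with hu_def
  have hu : t ≤ u := by
    rw [hu_def, le_div_iff₀ ha0]; nlinarith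
  have hu0 : 0 ≤ u := ht.trans hu
  set c : ℝ := Real.exp (-β * t) * (β * t + 1) with hc
  have hβ0 : 0 < β := by
    rw [hβ]
    have h1a : 1 < 1 / a := by rw [lt_div_iff₀ ha0]; linarith
    nlinarith
  have hβt : 0 ≤ β * t := mul_nonneg hβ0.le ht
  have hc0 : 0 < c := mul_pos (Real.exp_pos _) (by linarith)
  set E : Set Ω := {ω | t < min (T₁ ω) (a * T₂ ω)} with hE_def
  set S : Set Ω := {ω | t < T₁ ω} with hS_def
  have hES : E ⊆ S := fun ω hω => by
    simp only [hE_def, Set.mem_setOf_eq, lt_min_iff] at hω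
    exact hω.1
  have hE_meas : MeasurableSet E :=
    measurableSet_lt measurable_const (hT₁m.min (hT₂m.const_mul a))
  have hS_meas : MeasurableSet S := measurableSet_lt measurable_const hT₁m
  have hN_meas : ∀ s, Measurable (N s) := by
    intro s
    have hNs : N s = fun ω => (if T₁ ω ≤ s then (1:ℝ) else 0) + (if T₂ ω ≤ s then 1 else 0) :=
      funext fun ω => hN s ω
    rw [hNs]
    exact Measurable.add
      (Measurable.ite (measurableSet_le hT₁m measurable_const) measurable_const measurable_const)
      (Measurable.ite (measurableSet_le hT₂m measurable_const) measurable_const measurable_const)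
  -- F t ≤ traceTrivialSigma S
  have hFm' : F t ≤ traceTrivialSigma S := by
    rw [hF t]
    refine iSup₂_le fun s hs => ?_
    intro A hA
    obtain ⟨B, hB, rfl⟩ := hA
    have hNzero : ∀ ω, ω ∈ S → N s ω = 0 := by
      intro ω hω
      have hω' : t < T₁ ω := hω
      rw [hN s ω, if_neg (not_le.2 (lt_of_le_of_lt hs.2 hω')),
        if_neg (not_le.2 (lt_of_le_of_lt hs.2 (hω'.trans (hpos ω).2)))]
      norm_num
    refine ⟨hN_meas s hB, ?_⟩
    by_cases h0 : (0:ℝ) ∈ B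
    · exact Or.inl fun ω hω => by
        show N s ω ∈ B; rw [hNzero ω hω]; exact h0
    · refine Or.inr (Set.eq_empty_iff_forall_notMem.2 fun ω hω => ?_)
      have : N s ω ∈ B := hω.1
      rw [hNzero ω hω.2] at this
      exact h0 this
  have hm'le : traceTrivialSigma S ≤ ‹MeasurableSpace Ω› := fun A hA => hA.1
  have hm : F t ≤ ‹MeasurableSpace Ω› := hFm'.trans hm'le
  -- S is F t-measurable
  have hSF : MeasurableSet[F t] S := by
    have hSeq : S = N t ⁻¹' {(0:ℝ)} := by
      ext ω
      simp only [hS_def, Set.mem_setOf_eq, Set.mem_preimage, Set.mem_singleton_iff, hN t ω]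
      constructor
      · intro h
        rw [if_neg (not_le.2 h), if_neg (not_le.2 (h.trans (hpos ω).2))]
        norm_num
      · intro h
        by_contra hcon
        push_neg at hcon
        rw [if_pos hcon] at h
        split_ifs at h <;> norm_num at h
    have hle : MeasurableSpace.comap (N t) inferInstance ≤ F t := by
      rw [hF t]
      exact le_biSup (f := fun s => MeasurableSpace.comap (N s) inferInstance)
        (Set.mem_Icc.2 ⟨ht, le_rfl⟩)
    rw [hSeq]
    exact hle _ ⟨{0}, measurableSet_singleton 0, rfl⟩
  -- measure computations
  have hmuS : μ S = ENNReal.ofReal (Real.exp (-(lam * t))) := by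
    have h1 : S = T₁ ⁻¹' Set.Ioi t := rfl
    rw [h1, ← Measure.map_apply hT₁m measurableSet_Ioi, hd1, expMeasure_Ioi hlam,
      max_eq_left ht]
  have hmuE : μ E = ENNReal.ofReal (Real.exp (-(lam * t)) * c) := by
    have hEeq : E = (fun ω => (T₁ ω, T₂ ω - T₁ ω)) ⁻¹' {p : ℝ × ℝ | t < p.1 ∧ u < p.1 + p.2} := by
      ext ω
      simp only [hE_def, Set.mem_setOf_eq, Set.mem_preimage, lt_min_iff, add_sub_cancel]
      rw [hu_def, div_lt_iff₀ ha0, mul_comm]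
    rw [hEeq, ← Measure.map_apply (f := fun ω => (T₁ ω, T₂ ω - T₁ ω)) (hT₁m.prodMk (hT₂m.sub hT₁m)) (measurableSet_2d t u),
      (indepFun_iff_map_prod_eq_prod_map_map (g := fun ω => T₂ ω - T₁ ω) hT₁m.aemeasurable
        (hT₂m.sub hT₁m).aemeasurable).mp hindep, hd1, hd2, expProd_apply hlam ht hu]
    congr 1
    have h2 : lam * (u - t) = β * t := by
      rw [hβ, hu_def]; field_simp
    have h1 : -(lam * u) = -(lam * t) + -β * t := by
      rw [hβ, hu_def]; field_simp; ring
    rw [h2, h1, Real.exp_add, hc]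
    ring
  -- the two functions as indicators
  have hg : (fun ω => (if t < T₁ ω then (1:ℝ) else 0) * c) = Set.indicator S (fun _ => c) := by
    funext ω
    by_cases h : t < T₁ ω
    · rw [if_pos h, Set.indicator_of_mem (by exact h), one_mul]
    · rw [if_neg h, Set.indicator_of_notMem (by exact h), zero_mul]
  have hf_int : Integrable (Set.indicator E (fun _ => (1:ℝ))) μ :=
    (integrable_const (1:ℝ)).indicator hE_meas
  have hg_int : Integrable (fun ω => (if t < T₁ ω then (1:ℝ) else 0) * c) μ := by
    rw [hg]; exact (integrable_const c).indicator hS_meas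
  have hgm : AEStronglyMeasurable[F t] (fun ω => (if t < T₁ ω then (1:ℝ) else 0) * c) μ := by
    refine StronglyMeasurable.aestronglyMeasurable ?_
    rw [hg]
    exact (Measurable.indicator (m := F t) measurable_const hSF).stronglyMeasurable
  have hg_eq : ∀ A : Set Ω, MeasurableSet[F t] A → μ A < ⊤ →
      ∫ x in A, (if t < T₁ x then (1:ℝ) else 0) * c ∂μ
        = ∫ x in A, Set.indicator E (fun _ => (1:ℝ)) x ∂μ := by
    intro A hA _
    obtain ⟨hAm, hdich⟩ := hFm' A hA
    rw [hg, setIntegral_indicator hS_meas, setIntegral_indicator hE_meas,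
      setIntegral_const, setIntegral_const]
    rcases hdich with hsub | hdis
    · rw [Set.inter_eq_right.2 hsub, Set.inter_eq_right.2 (hES.trans hsub), measureReal_def, measureReal_def, hmuS, hmuE,
        ENNReal.toReal_ofReal (Real.exp_pos _).le,
        ENNReal.toReal_ofReal (by positivity), smul_eq_mul, smul_eq_mul]
      ring
    · have hAE : A ∩ E = ∅ := Set.eq_empty_of_subset_empty
        (by rw [← hdis]; exact Set.inter_subset_inter_right A hES)
      rw [hdis, hAE]
      simp
  haveI : SigmaFinite (μ.trim hm) := inferInstance
  exact (ae_eq_condExp_of_forall_setIntegral_eq hm hf_int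
    (fun A _ _ => hg_int.integrableOn) hg_eq hgm).symm
end

section
/- Let T₁, T₂ be the first two jump times of a Poisson process with intensity λ, let k₁, k₂ > 0 with k₁ + k₂ = 1, and let τ = k₁T₁ + k₂T₂. Then on the event {T₁ ≤ t < T₂}, P(k₁T₁ + k₂T₂ > t | F_t) = e^{-λ(k₁/k₂)(t - T₁)}, so that Z_t := P(τ > t | F_t) = 1_{T₁ > t} + 1_{T₁ ≤ t} 1_{T₂ > t} e^{-λ(k₁/k₂)(t-T₁)}. -/
open MeasureTheory ProbabilityTheory Real Set

namespace CondexpJumpAux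

lemma expMeasure_apply {r : ℝ} {s : Set ℝ} (hs : MeasurableSet s) :
    expMeasure r s = ∫⁻ y in s, exponentialPDF r y := by
  rw [expMeasure, gammaMeasure, withDensity_apply _ hs]; rfl

lemma expMeasure_Iio_zero {r : ℝ} : expMeasure r (Iio 0) = 0 := by
  rw [expMeasure_apply measurableSet_Iio]
  exact lintegral_exponentialPDF_of_nonpos le_rfl

lemma expMeasure_Ioi {r : ℝ} (hr : 0 < r) {x : ℝ} (hx : 0 ≤ x) :
    expMeasure r (Ioi x) = ENNReal.ofReal (Real.exp (-(r * x))) := by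
  haveI : IsProbabilityMeasure (expMeasure r) := isProbabilityMeasure_expMeasure hr
  have h1 : expMeasure r (Iic x) = ENNReal.ofReal (1 - Real.exp (-(r * x))) := by
    rw [expMeasure_apply measurableSet_Iic, lintegral_exponentialPDF_eq_antiDeriv hr, if_pos hx]
  have hle : Real.exp (-(r * x)) ≤ 1 :=
    Real.exp_le_one_iff.mpr (neg_nonpos.mpr (mul_nonneg hr.le hx))
  rw [← compl_Iic, measure_compl measurableSet_Iic (measure_ne_top _ _), measure_univ, h1]
  rw [← ENNReal.ofReal_one, ← ENNReal.ofReal_sub _ (sub_nonneg.mpr hle)]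
  congr 1; ring

lemma expMeasure_Ioi_toReal {r : ℝ} (hr : 0 < r) {x : ℝ} (hx : 0 ≤ x) :
    (expMeasure r (Ioi x)).toReal = Real.exp (-(r * x)) := by
  rw [expMeasure_Ioi hr hx, ENNReal.toReal_ofReal (Real.exp_nonneg _)]

end CondexpJumpAux

namespace CondexpJumpAux

lemma ae_nonneg {r : ℝ} : ∀ᵐ y ∂(expMeasure r), 0 ≤ y := by
  rw [ae_iff]
  have : {y : ℝ | ¬ 0 ≤ y} = Iio 0 := by ext y; simp only [mem_setOf_eq, mem_Iio, not_le]
  rw [this]; exact expMeasure_Iio_zero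

lemma inner_eq {lam k₁ k₂ : ℝ} (hlam : 0 < lam) (hk₁ : 0 < k₁) (hk₂ : 0 < k₂)
    (hk : k₁ + k₂ = 1) (t x : ℝ) :
    ∫ y, (if t < x + k₂ * y then (1:ℝ) else 0) ∂(expMeasure lam)
      = ∫ y, (if t < x then (1:ℝ) else if t - x < y then Real.exp (-lam*(k₁/k₂)*(t-x)) else 0)
          ∂(expMeasure lam) := by
  haveI : IsProbabilityMeasure (expMeasure lam) := isProbabilityMeasure_expMeasure hlam
  by_cases hx : t < x
  · have hL : (fun y : ℝ => if t < x + k₂ * y then (1:ℝ) else 0) =ᵐ[expMeasure lam]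
        (fun _ => (1:ℝ)) := by
      filter_upwards [ae_nonneg (r := lam)] with y hy
      rw [if_pos (by nlinarith)]
    rw [integral_congr_ae hL]
    simp [if_pos hx]
  · push_neg at hx
    have hL : (fun y : ℝ => if t < x + k₂ * y then (1:ℝ) else 0)
        = Set.indicator (Ioi ((t - x)/k₂)) (fun _ => (1:ℝ)) := by
      ext y
      rw [Set.indicator_apply]
      congr 1
      simp only [mem_Ioi, eq_iff_iff, div_lt_iff₀ hk₂]
      constructor <;> intro h <;> nlinarith
    have hR : (fun y : ℝ => if t < x then (1:ℝ) else if t - x < y then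
          Real.exp (-lam*(k₁/k₂)*(t-x)) else 0)
        = Set.indicator (Ioi (t - x)) (fun _ => Real.exp (-lam*(k₁/k₂)*(t-x))) := by
      ext y
      rw [Set.indicator_apply, if_neg (not_lt.mpr hx)]
      simp [mem_Ioi]
    rw [hL, hR, integral_indicator measurableSet_Ioi, integral_indicator measurableSet_Ioi,
      setIntegral_const, setIntegral_const, measureReal_def, measureReal_def,
      expMeasure_Ioi_toReal hlam (div_nonneg (sub_nonneg.mpr hx) hk₂.le),
      expMeasure_Ioi_toReal hlam (sub_nonneg.mpr hx)]
    rw [smul_eq_mul, smul_eq_mul, mul_one, ← Real.exp_add]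
    congr 1
    have hk' : k₁ = 1 - k₂ := by linarith
    subst hk'
    field_simp
    ring

def Csys {Ω : Type*} (T₁ T₂ : Ω → ℝ) (t : ℝ) : Set (Set Ω) :=
  {Set.univ} ∪ ({A | ∃ a, a ≤ t ∧ A = {ω | T₁ ω ≤ a}} ∪
    {A | ∃ a b, a ≤ t ∧ b ≤ t ∧ A = {ω | T₁ ω ≤ a ∧ T₂ ω ≤ b}})

end CondexpJumpAux

open CondexpJumpAux

/-- For the first two jump times `T₁, T₂` of a Poisson process with intensity `λ`,
`k₁, k₂ > 0` with `k₁ + k₂ = 1` and `τ = k₁T₁ + k₂T₂`, the Azéma supermartingale is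
`Z_t = P(τ > t | F_t) = 1_{T₁ > t} + 1_{T₁ ≤ t} 1_{T₂ > t} e^{-λ(k₁/k₂)(t - T₁)}`,
`F` being the natural filtration of the counting process `N`. -/
theorem condexp_convex_combination_jump_times {Ω : Type*} [MeasurableSpace Ω]
    (μ : Measure Ω) [IsProbabilityMeasure μ] (lam k₁ k₂ : ℝ) (hlam : 0 < lam)
    (hk₁ : 0 < k₁) (hk₂ : 0 < k₂) (hk : k₁ + k₂ = 1)
    (T₁ T₂ : Ω → ℝ) (hT₁m : Measurable T₁) (hT₂m : Measurable T₂)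
    (hpos : ∀ ω, 0 < T₁ ω ∧ T₁ ω < T₂ ω)
    (hd1 : Measure.map T₁ μ = expMeasure lam)
    (hd2 : Measure.map (fun ω => T₂ ω - T₁ ω) μ = expMeasure lam)
    (hindep : IndepFun T₁ (fun ω => T₂ ω - T₁ ω) μ)
    (N : ℝ → Ω → ℝ)
    (hN : ∀ t ω, N t ω = (if T₁ ω ≤ t then 1 else 0) + (if T₂ ω ≤ t then 1 else 0))
    (F : ℝ → MeasurableSpace Ω)
    (hF : ∀ t, F t = ⨆ s ∈ Set.Icc (0 : ℝ) t, MeasurableSpace.comap (N s) inferInstance) :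
    ∀ t : ℝ, 0 ≤ t →
      μ[Set.indicator {ω | t < k₁ * T₁ ω + k₂ * T₂ ω} (fun _ => (1 : ℝ)) | F t]
        =ᵐ[μ] fun ω =>
          if t < T₁ ω then 1
          else if t < T₂ ω then Real.exp (-lam * (k₁ / k₂) * (t - T₁ ω)) else 0 := by
  intro t ht
  classical
  haveI hνprob : IsProbabilityMeasure (expMeasure lam) := isProbabilityMeasure_expMeasure hlam
  set ν := expMeasure lam with hν
  set E : Ω → ℝ := fun ω => T₂ ω - T₁ ω with hE
  have hEm : Measurable E := hT₂m.sub hT₁m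
  set g : Ω → ℝ := fun ω =>
      if t < T₁ ω then 1
      else if t < T₂ ω then Real.exp (-lam * (k₁ / k₂) * (t - T₁ ω)) else 0 with hgdef
  set f : Ω → ℝ := Set.indicator {ω | t < k₁ * T₁ ω + k₂ * T₂ ω} (fun _ => (1 : ℝ)) with hfdef
  -- measurability of N
  have hNmeas : ∀ s, Measurable (N s) := by
    intro s
    have hNs : N s = fun ω => (if T₁ ω ≤ s then (1:ℝ) else 0) + (if T₂ ω ≤ s then 1 else 0) :=
      funext fun ω => hN s ω
    rw [hNs]
    exact (Measurable.ite (measurableSet_le hT₁m measurable_const) measurable_const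
      measurable_const).add (Measurable.ite (measurableSet_le hT₂m measurable_const)
        measurable_const measurable_const)
  have hm : F t ≤ (inferInstance : MeasurableSpace Ω) := by
    rw [hF]
    exact iSup₂_le fun s _ => measurable_iff_comap_le.mp (hNmeas s)
  haveI : SigmaFinite (μ.trim hm) := by
    haveI := isFiniteMeasure_trim hm (μ := μ)
    infer_instance
  -- F t contains the relevant sets
  have hs1 : ∀ a : ℝ, a ≤ t → MeasurableSet[F t] {ω | T₁ ω ≤ a} := by
    intro a hat
    rcases lt_or_ge a 0 with ha | ha
    · have he : {ω | T₁ ω ≤ a} = ∅ := by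
        ext ω
        simp only [Set.mem_setOf_eq, Set.mem_empty_iff_false, iff_false, not_le]
        exact ha.trans_le (hpos ω).1.le
      rw [he]
      exact @MeasurableSet.empty _ (F t)
    · have hset : {ω | T₁ ω ≤ a} = N a ⁻¹' (Set.Ici 1) := by
        ext ω
        simp only [Set.mem_setOf_eq, Set.mem_preimage, Set.mem_Ici, hN]
        rcases hpos ω with ⟨h0, h12⟩
        by_cases h1 : T₁ ω ≤ a
        · simp only [if_pos h1]
          refine ⟨fun _ => ?_, fun _ => h1⟩
          split_ifs <;> norm_num
        · have h2 : ¬ T₂ ω ≤ a := fun h2 => h1 (h12.le.trans h2)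
          simp [h1, h2]
      rw [hset, hF]
      have hcomap : MeasurableSet[MeasurableSpace.comap (N a) inferInstance]
          (N a ⁻¹' Set.Ici 1) := ⟨Set.Ici 1, measurableSet_Ici, rfl⟩
      exact le_iSup₂ (f := fun s (_ : s ∈ Set.Icc (0:ℝ) t) =>
        MeasurableSpace.comap (N s) inferInstance) a ⟨ha, hat⟩ _ hcomap
  have hs2 : ∀ b : ℝ, b ≤ t → MeasurableSet[F t] {ω | T₂ ω ≤ b} := by
    intro b hbt
    rcases lt_or_ge b 0 with hb | hb
    · have he : {ω | T₂ ω ≤ b} = ∅ := by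
        ext ω
        simp only [Set.mem_setOf_eq, Set.mem_empty_iff_false, iff_false, not_le]
        exact hb.trans_le ((hpos ω).1.trans (hpos ω).2).le
      rw [he]
      exact @MeasurableSet.empty _ (F t)
    · have hset : {ω | T₂ ω ≤ b} = N b ⁻¹' (Set.Ici 2) := by
        ext ω
        simp only [Set.mem_setOf_eq, Set.mem_preimage, Set.mem_Ici, hN]
        rcases hpos ω with ⟨h0, h12⟩
        by_cases h2 : T₂ ω ≤ b
        · have h1 : T₁ ω ≤ b := h12.le.trans h2
          simp only [if_pos h1, if_pos h2]
          norm_num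
          exact h2
        · rw [if_neg h2]
          constructor
          · intro h; exact absurd h h2
          · intro hge
            exfalso
            split_ifs at hge <;> norm_num at hge
      rw [hset, hF]
      have hcomap : MeasurableSet[MeasurableSpace.comap (N b) inferInstance]
          (N b ⁻¹' Set.Ici 2) := ⟨Set.Ici 2, measurableSet_Ici, rfl⟩
      exact le_iSup₂ (f := fun s (_ : s ∈ Set.Icc (0:ℝ) t) =>
        MeasurableSpace.comap (N s) inferInstance) b ⟨hb, hbt⟩ _ hcomap
  -- truncated T₁ is F t-measurable
  have hminm : Measurable[F t] (fun ω => min (T₁ ω) t) := by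
    apply measurable_of_Iic
    intro x
    by_cases hx : t ≤ x
    · have hu : (fun ω => min (T₁ ω) t) ⁻¹' Set.Iic x = Set.univ := by
        ext ω
        simp only [Set.mem_preimage, Set.mem_Iic, Set.mem_univ, iff_true, min_le_iff]
        exact Or.inr hx
      rw [hu]
      exact @MeasurableSet.univ _ (F t)
    · push_neg at hx
      have hu : (fun ω => min (T₁ ω) t) ⁻¹' Set.Iic x = {ω | T₁ ω ≤ x} := by
        ext ω
        simp only [Set.mem_preimage, Set.mem_Iic, Set.mem_setOf_eq, min_le_iff]
        exact ⟨fun h => h.resolve_right (not_le.mpr hx), Or.inl⟩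
      rw [hu]
      exact hs1 x hx.le
  have h1t : MeasurableSet[F t] {ω | t < T₁ ω} := by
    have hc : {ω | t < T₁ ω} = {ω | T₁ ω ≤ t}ᶜ := by
      ext ω; simp [not_le]
    rw [hc]; exact (hs1 t le_rfl).compl
  have h2t : MeasurableSet[F t] {ω | t < T₂ ω} := by
    have hc : {ω | t < T₂ ω} = {ω | T₂ ω ≤ t}ᶜ := by
      ext ω; simp [not_le]
    rw [hc]; exact (hs2 t le_rfl).compl
  -- g is F t-measurable
  have hgFm : Measurable[F t] g := by
    have hg' : g = fun ω =>
        if t < T₁ ω then 1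
        else if t < T₂ ω then Real.exp (-lam * (k₁ / k₂) * (t - min (T₁ ω) t)) else 0 := by
      funext ω
      rw [hgdef]
      by_cases h1 : t < T₁ ω
      · simp [h1]
      · push_neg at h1
        rw [min_eq_left h1]
    rw [hg']
    exact Measurable.ite h1t measurable_const
      (Measurable.ite h2t
        (Real.measurable_exp.comp ((measurable_const.sub hminm).const_mul _))
        measurable_const)
  have hgm : Measurable g := hgFm.mono hm le_rfl
  -- integrability
  have hfsetm : MeasurableSet {ω | t < k₁ * T₁ ω + k₂ * T₂ ω} :=
    measurableSet_lt measurable_const ((hT₁m.const_mul k₁).add (hT₂m.const_mul k₂))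
  have hf_int : Integrable f μ := (integrable_const (1:ℝ)).indicator hfsetm
  have hg01 : ∀ ω, 0 ≤ g ω ∧ g ω ≤ 1 := by
    intro ω
    simp only [hgdef]
    split_ifs with h1 h2
    · norm_num
    · refine ⟨Real.exp_nonneg _, Real.exp_le_one_iff.mpr ?_⟩
      push_neg at h1
      have : 0 ≤ t - T₁ ω := by linarith
      have hc : -lam * (k₁ / k₂) ≤ 0 := by
        have : 0 ≤ lam * (k₁ / k₂) := by positivity
        linarith
      nlinarith
    · norm_num
  have hg_int : Integrable g μ := by
    refine (integrable_const (1:ℝ)).mono' hgm.aestronglyMeasurable (ae_of_all _ fun ω => ?_)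
    rw [Real.norm_eq_abs, abs_le]
    exact ⟨by linarith [(hg01 ω).1], (hg01 ω).2⟩
  -- joint law
  have hmap : μ.map (fun ω => (T₁ ω, E ω)) = ν.prod ν := by
    rw [(indepFun_iff_map_prod_eq_prod_map_map hT₁m.aemeasurable hEm.aemeasurable).mp hindep,
      hd1, hd2]
  -- key computation
  have harith : ∀ ω, k₁ * T₁ ω + k₂ * T₂ ω = T₁ ω + k₂ * E ω := by
    intro ω
    simp only [hE]
    linear_combination T₁ ω * hk
  have key : ∀ S : Set ℝ, MeasurableSet S →
      ∫ ω in T₁ ⁻¹' S, g ω ∂μ = ∫ ω in T₁ ⁻¹' S, f ω ∂μ := by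
    intro S hS
    set H₁ : ℝ × ℝ → ℝ := fun p =>
      S.indicator (fun _ => (1:ℝ)) p.1 * (if t < p.1 + k₂ * p.2 then 1 else 0) with hH₁
    set H₂ : ℝ × ℝ → ℝ := fun p =>
      S.indicator (fun _ => (1:ℝ)) p.1 *
        (if t < p.1 then 1 else if t - p.1 < p.2 then Real.exp (-lam * (k₁ / k₂) * (t - p.1))
          else 0) with hH₂
    have hH₁m : Measurable H₁ := by
      refine ((measurable_const.indicator hS).comp measurable_fst).mul ?_
      exact Measurable.ite
        (measurableSet_lt measurable_const (measurable_fst.add (measurable_snd.const_mul k₂)))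
        measurable_const measurable_const
    have hH₂m : Measurable H₂ := by
      refine ((measurable_const.indicator hS).comp measurable_fst).mul ?_
      refine Measurable.ite (measurableSet_lt measurable_const measurable_fst) measurable_const ?_
      exact Measurable.ite
        (measurableSet_lt (measurable_const.sub measurable_fst) measurable_snd)
        (Real.measurable_exp.comp ((measurable_const.sub measurable_fst).const_mul _))
        measurable_const
    have hfe : ∀ ω, (T₁ ⁻¹' S).indicator f ω = H₁ (T₁ ω, E ω) := by
      intro ω
      simp only [hH₁, hfdef, Set.indicator_apply, Set.mem_preimage, Set.mem_setOf_eq, harith ω]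
      split_ifs <;> norm_num
    have hge : ∀ ω, (T₁ ⁻¹' S).indicator g ω = H₂ (T₁ ω, E ω) := by
      intro ω
      have hiff : (t - T₁ ω < E ω) = (t < T₂ ω) := by
        simp only [hE, eq_iff_iff]
        constructor <;> intro <;> linarith
      simp only [hH₂, hgdef, Set.indicator_apply, Set.mem_preimage, hiff]
      split_ifs <;> norm_num
    have hfac1 : ∀ p : ℝ × ℝ, 0 ≤ (if t < p.1 + k₂ * p.2 then (1:ℝ) else 0) ∧
        (if t < p.1 + k₂ * p.2 then (1:ℝ) else 0) ≤ 1 := by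
      intro p; split_ifs <;> norm_num
    have hfac2 : ∀ p : ℝ × ℝ,
        0 ≤ (if t < p.1 then (1:ℝ) else if t - p.1 < p.2 then
            Real.exp (-lam * (k₁ / k₂) * (t - p.1)) else 0) ∧
        (if t < p.1 then (1:ℝ) else if t - p.1 < p.2 then
            Real.exp (-lam * (k₁ / k₂) * (t - p.1)) else 0) ≤ 1 := by
      intro p
      split_ifs with h1 h2
      · norm_num
      · push_neg at h1
        refine ⟨Real.exp_nonneg _, Real.exp_le_one_iff.mpr ?_⟩
        have h3 : 0 ≤ lam * (k₁ / k₂) := by positivity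
        nlinarith
      · norm_num
    have hind01 : ∀ x : ℝ, 0 ≤ S.indicator (fun _ => (1:ℝ)) x ∧
        S.indicator (fun _ => (1:ℝ)) x ≤ 1 := by
      intro x; rw [Set.indicator_apply]; split_ifs <;> norm_num
    have habs : ∀ a b : ℝ, 0 ≤ a → a ≤ 1 → 0 ≤ b → b ≤ 1 → |a * b| ≤ 1 := by
      intro a b h1 h2 h3 h4
      rw [abs_of_nonneg (mul_nonneg h1 h3)]
      nlinarith
    have hH₁int : Integrable H₁ (ν.prod ν) := by
      refine (integrable_const (1:ℝ)).mono' hH₁m.aestronglyMeasurable (ae_of_all _ fun p => ?_)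
      simp only [hH₁, Real.norm_eq_abs]
      exact habs _ _ (hind01 p.1).1 (hind01 p.1).2 (hfac1 p).1 (hfac1 p).2
    have hH₂int : Integrable H₂ (ν.prod ν) := by
      refine (integrable_const (1:ℝ)).mono' hH₂m.aestronglyMeasurable (ae_of_all _ fun p => ?_)
      simp only [hH₂, Real.norm_eq_abs]
      exact habs _ _ (hind01 p.1).1 (hind01 p.1).2 (hfac2 p).1 (hfac2 p).2
    have step1 : ∫ ω in T₁ ⁻¹' S, g ω ∂μ = ∫ p, H₂ p ∂(ν.prod ν) := by
      rw [← integral_indicator (hT₁m hS), integral_congr_ae (ae_of_all _ hge), ← hmap]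
      exact (integral_map (hT₁m.prodMk hEm).aemeasurable hH₂m.aestronglyMeasurable).symm
    have step2 : ∫ ω in T₁ ⁻¹' S, f ω ∂μ = ∫ p, H₁ p ∂(ν.prod ν) := by
      rw [← integral_indicator (hT₁m hS), integral_congr_ae (ae_of_all _ hfe), ← hmap]
      exact (integral_map (hT₁m.prodMk hEm).aemeasurable hH₁m.aestronglyMeasurable).symm
    have step3 : ∫ p, H₂ p ∂(ν.prod ν) = ∫ p, H₁ p ∂(ν.prod ν) := by
      rw [MeasureTheory.integral_prod _ hH₂int, MeasureTheory.integral_prod _ hH₁int]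
      refine integral_congr_ae (ae_of_all _ fun x => ?_)
      simp only [hH₁, hH₂]
      rw [integral_const_mul, integral_const_mul]
      congr 1
      exact (inner_eq hlam hk₁ hk₂ hk t x).symm
    rw [step1, step2, step3]
  -- π-system
  have hCmem : ∀ A : Set Ω, A ∈ Csys T₁ T₂ t ↔ A = Set.univ ∨
      (∃ a, a ≤ t ∧ A = {ω | T₁ ω ≤ a}) ∨
      (∃ a b, a ≤ t ∧ b ≤ t ∧ A = {ω | T₁ ω ≤ a ∧ T₂ ω ≤ b}) := by
    intro A
    simp [Csys, Set.mem_union, Set.mem_singleton_iff, Set.mem_setOf_eq]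
  have hpi : IsPiSystem (Csys T₁ T₂ t) := by
    intro A hA B hB _
    rw [hCmem] at hA hB ⊢
    rcases hA with rfl | ⟨a, hat, rfl⟩ | ⟨a, b, hat, hbt, rfl⟩ <;>
      rcases hB with rfl | ⟨a', hat', rfl⟩ | ⟨a', b', hat', hbt', rfl⟩
    · left; simp
    · right; left; exact ⟨a', hat', by simp⟩
    · right; right; exact ⟨a', b', hat', hbt', by simp⟩
    · right; left; exact ⟨a, hat, by simp⟩
    · right; left
      refine ⟨min a a', min_le_of_left_le hat, ?_⟩
      ext ω; simp [le_min_iff]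
    · right; right
      refine ⟨min a a', b', min_le_of_left_le hat, hbt', ?_⟩
      ext ω; simp only [Set.mem_inter_iff, Set.mem_setOf_eq, le_min_iff]; tauto
    · right; right; exact ⟨a, b, hat, hbt, by simp⟩
    · right; right
      refine ⟨min a a', b, min_le_of_left_le hat, hbt, ?_⟩
      ext ω; simp only [Set.mem_inter_iff, Set.mem_setOf_eq, le_min_iff]; tauto
    · right; right
      refine ⟨min a a', min b b', min_le_of_left_le hat, min_le_of_left_le hbt, ?_⟩
      ext ω; simp only [Set.mem_inter_iff, Set.mem_setOf_eq, le_min_iff]; tauto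
  -- generating
  have hgen : F t = MeasurableSpace.generateFrom (Csys T₁ T₂ t) := by
    apply le_antisymm
    · rw [hF]
      refine iSup₂_le fun s hs => ?_
      refine measurable_iff_comap_le.mp ?_
      have h1 : MeasurableSet[MeasurableSpace.generateFrom (Csys T₁ T₂ t)] {ω | T₁ ω ≤ s} :=
        MeasurableSpace.measurableSet_generateFrom
          ((hCmem _).mpr (Or.inr (Or.inl ⟨s, hs.2, rfl⟩)))
      have h2 : MeasurableSet[MeasurableSpace.generateFrom (Csys T₁ T₂ t)] {ω | T₂ ω ≤ s} := by
        have hset : {ω | T₂ ω ≤ s} = {ω | T₁ ω ≤ s ∧ T₂ ω ≤ s} :=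
          Set.ext fun ω => ⟨fun h => ⟨(hpos ω).2.le.trans h, h⟩, fun h => h.2⟩
        rw [hset]
        exact MeasurableSpace.measurableSet_generateFrom
          ((hCmem _).mpr (Or.inr (Or.inr ⟨s, s, hs.2, hs.2, rfl⟩)))
      have hNs : N s = fun ω => (if T₁ ω ≤ s then (1:ℝ) else 0) + (if T₂ ω ≤ s then 1 else 0) :=
        funext fun ω => hN s ω
      rw [hNs]
      exact (Measurable.ite h1 measurable_const measurable_const).add
        (Measurable.ite h2 measurable_const measurable_const)
    · refine MeasurableSpace.generateFrom_le fun A hA => ?_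
      rcases (hCmem A).mp hA with rfl | ⟨a, hat, rfl⟩ | ⟨a, b, hat, hbt, rfl⟩
      · exact @MeasurableSet.univ _ (F t)
      · exact hs1 a hat
      · have hset : {ω | T₁ ω ≤ a ∧ T₂ ω ≤ b} = {ω | T₁ ω ≤ a} ∩ {ω | T₂ ω ≤ b} := rfl
        rw [hset]
        exact (hs1 a hat).inter (hs2 b hbt)
  have huniv : ∫ ω, g ω ∂μ = ∫ ω, f ω ∂μ := by
    have h := key Set.univ MeasurableSet.univ
    simpa [Set.preimage_univ, Measure.restrict_univ] using h
  have hsets : ∀ s : Set Ω, MeasurableSet[F t] s → ∫ ω in s, g ω ∂μ = ∫ ω in s, f ω ∂μ := by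
    refine MeasurableSpace.induction_on_inter (m := F t) hgen hpi ?_ ?_ ?_ ?_
    · simp
    · intro A hA
      rcases (hCmem A).mp hA with rfl | ⟨a, hat, rfl⟩ | ⟨a, b, hat, hbt, rfl⟩
      · simpa [Measure.restrict_univ] using huniv
      · have hpre : {ω | T₁ ω ≤ a} = T₁ ⁻¹' Set.Iic a := rfl
        rw [hpre]
        exact key _ measurableSet_Iic
      · rw [setIntegral_eq_zero_of_forall_eq_zero, setIntegral_eq_zero_of_forall_eq_zero]
        · intro ω hω
          simp only [hfdef, Set.indicator_apply, Set.mem_setOf_eq]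
          rw [if_neg]
          push_neg
          nlinarith [hω.1, hω.2]
        · intro ω hω
          simp only [hgdef]
          rw [if_neg (not_lt.mpr (hω.1.trans hat)), if_neg (not_lt.mpr (hω.2.trans hbt))]
    · intro A hAm hA
      have hA' : MeasurableSet A := hm _ hAm
      have h1 := integral_add_compl hA' hg_int
      have h2 := integral_add_compl hA' hf_int
      linarith
    · intro s hdisj hmeas hint
      rw [integral_iUnion (fun i => hm _ (hmeas i)) hdisj hg_int.integrableOn,
        integral_iUnion (fun i => hm _ (hmeas i)) hdisj hf_int.integrableOn]
      exact tsum_congr hint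
  exact (ae_eq_condExp_of_forall_setIntegral_eq hm hf_int (fun s _ _ => hg_int.integrableOn)
    (fun s hs _ => hsets s hs) (hgFm.stronglyMeasurable.aestronglyMeasurable)).symm
end
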